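/- Let B ∈ H¹(ℝ²) and b with ∂_x b ∈ L²(ℝ²), related by ∂_y B = −∂_x b (divergence-free condition). Then ‖B‖_{L²_x(L^∞_y)} ≤ C ‖B‖_{L²}^{1/2} ‖∂_x b‖_{L²}^{1/2}. -/

import Mathlib

open MeasureTheory

/-- `∂_x`. -/
noncomputable def dx (f : ℝ × ℝ → ℝ) : ℝ × ℝ → ℝ := fun p => fderiv ℝ f p (1, 0)

/-- `∂_y`. -/
noncomputable def dy (f : ℝ × ℝ → ℝ) : ℝ × ℝ → ℝ := fun p => fderiv ℝ f p (0, 1)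

private lemma two_abs_mul_le (a b : ℝ) : 2 * |a * b| ≤ a ^ 2 + b ^ 2 := by
  rw [abs_mul]
  nlinarith [sq_nonneg (|a| - |b|), sq_abs a, sq_abs b, abs_nonneg a, abs_nonneg b]

private lemma real_le_of_forall_pos_le_add {a b : ℝ} (h : ∀ ε : ℝ, 0 < ε → a ≤ b + ε) :
    a ≤ b := by
  by_contra hc
  push_neg at hc
  have := h ((a - b) / 2) (by linarith)
  linarith

theorem stmt19 :
    ∃ C > 0, ∀ B b : ℝ × ℝ → ℝ,
      Differentiable ℝ B → Differentiable ℝ b →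
      Integrable (fun p : ℝ × ℝ => B p ^ 2) →
      Integrable (fun p : ℝ × ℝ => dx B p ^ 2) →
      Integrable (fun p : ℝ × ℝ => dy B p ^ 2) →
      Integrable (fun p : ℝ × ℝ => dx b p ^ 2) →
      (∀ p : ℝ × ℝ, dy B p = -dx b p) →
      Real.sqrt (∫ x : ℝ, (⨆ y : ℝ, |B (x, y)|) ^ 2)
        ≤ C * Real.sqrt (∫ p : ℝ × ℝ, B p ^ 2) ^ ((1 : ℝ) / 2) *
            Real.sqrt (∫ p : ℝ × ℝ, dx b p ^ 2) ^ ((1 : ℝ) / 2) := by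
  refine ⟨Real.sqrt 2, Real.sqrt_pos.mpr two_pos, ?_⟩
  intro B b hB hb hBint hdxint hdyint hbxint hdiv
  -- replace dx b by dy B
  have hsq : ∀ p : ℝ × ℝ, dx b p ^ 2 = dy B p ^ 2 := by
    intro p; rw [hdiv p]; ring
  have hdyint' : Integrable (fun p : ℝ × ℝ => dy B p ^ 2) := hdyint
  -- measurability of dy B
  have hmd : Measurable (dy B) := measurable_fderiv_apply_const ℝ B (0, 1)
  have hmB : Measurable B := hB.continuous.measurable
  -- the dominating function
  set G : ℝ × ℝ → ℝ := fun p => 2 * |B p * dy B p| with hGdef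
  have hGmeas : Measurable G := ((hmB.mul hmd).abs.const_mul 2)
  have hGnonneg : ∀ p, 0 ≤ G p := fun p => by positivity
  have hGint : Integrable G := by
    refine (hBint.add hdyint').mono' hGmeas.aestronglyMeasurable ?_
    filter_upwards with p
    rw [Real.norm_eq_abs, abs_of_nonneg (hGnonneg p)]
    exact two_abs_mul_le _ _
  -- move to product measure
  have hvol : (volume : Measure (ℝ × ℝ)) = (volume : Measure ℝ).prod volume :=
    rfl
  rw [hvol] at hGint hBint
  -- fiberwise bound, a.e. in x
  have hglb : ∀ᵐ x : ℝ, (⨆ y : ℝ, |B (x, y)|) ^ 2 ≤ ∫ y : ℝ, G (x, y) := by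
    filter_upwards [hBint.prod_right_ae, hGint.prod_right_ae] with x hB2 hGx
    set g : ℝ := ∫ y : ℝ, G (x, y) with hgdef
    have hgnn : 0 ≤ g := integral_nonneg fun y => hGnonneg _
    -- derivative setup
    set F' : ℝ → ℝ := fun y => 2 * (B (x, y) * dy B (x, y)) with hF'def
    have hderiv : ∀ y : ℝ, HasDerivAt (fun y => B (x, y) ^ 2) (F' y) y := by
      intro y
      have hline : HasDerivAt (fun y : ℝ => ((x, y) : ℝ × ℝ)) ((0 : ℝ), (1 : ℝ)) y :=
        (hasDerivAt_const y x).prodMk (hasDerivAt_id y)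
      have hxy : HasDerivAt (fun y => B (x, y)) (dy B (x, y)) y :=
        (hB (x, y)).hasFDerivAt.comp_hasDerivAt y hline
      have := hxy.fun_pow 2
      simpa [F', pow_one] using this.congr_deriv (by push_cast; ring)
    have habsF' : ∀ y : ℝ, |F' y| = G (x, y) := by
      intro y; simp [F', G, abs_mul]
    have hF'int : Integrable F' := by
      refine hGx.mono' ?_ ?_
      · exact ((hmB.comp measurable_prodMk_left).mul
          (hmd.comp measurable_prodMk_left)).const_mul 2 |>.aestronglyMeasurable
      · filter_upwards with y
        rw [Real.norm_eq_abs, habsF' y]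
    have hintabs : (∫ y : ℝ, |F' y|) = g := by
      rw [hgdef]; exact integral_congr_ae (Filter.Eventually.of_forall fun y => habsF' y)
    -- interval integral bound
    have hII : ∀ u v : ℝ, |∫ t in u..v, F' t| ≤ g := by
      have key : ∀ u v : ℝ, u ≤ v → |∫ t in u..v, F' t| ≤ g := by
        intro u v huv
        refine le_trans (intervalIntegral.abs_integral_le_integral_abs huv) ?_
        rw [intervalIntegral.integral_of_le huv, ← hintabs]
        exact setIntegral_le_integral hF'int.abs
          (Filter.Eventually.of_forall fun y => abs_nonneg _)
      intro u v
      rcases le_total u v with h | h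
      · exact key u v h
      · rw [intervalIntegral.integral_symm, abs_neg]; exact key v u h
    -- pointwise bound via FTC
    have hpt : ∀ y : ℝ, B (x, y) ^ 2 ≤ g := by
      intro y
      refine real_le_of_forall_pos_le_add fun ε hε => ?_
      -- find a point where B(x,·)^2 < ε
      have hexists : ∃ y₁ : ℝ, B (x, y₁) ^ 2 < ε := by
        by_contra hc
        push_neg at hc
        obtain ⟨n, hn⟩ := exists_nat_gt ((∫ y : ℝ, B (x, y) ^ 2) / ε)
        have h1 : ε * n ≤ ∫ y in Set.Ioc (0 : ℝ) n, B (x, y) ^ 2 := by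
          have := setIntegral_ge_of_const_le (s := Set.Ioc (0:ℝ) n) (measurableSet_Ioc)
            (by simp [Real.volume_Ioc])
            (fun y _ => hc y) (hB2.integrableOn)
          calc ε * n = ε * ((volume (Set.Ioc (0:ℝ) n)).toReal) := by
                simp [Real.volume_Ioc]
            _ ≤ _ := by rw [smul_eq_mul, mul_comm] at this; exact this
        have h2 : (∫ y in Set.Ioc (0 : ℝ) n, B (x, y) ^ 2) ≤ ∫ y : ℝ, B (x, y) ^ 2 :=
          setIntegral_le_integral hB2 (Filter.Eventually.of_forall fun y => sq_nonneg _)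
        have h3 : (∫ y : ℝ, B (x, y) ^ 2) < ε * n := by
          rw [div_lt_iff₀ hε] at hn
          calc (∫ y : ℝ, B (x, y) ^ 2) < n * ε := hn
            _ = ε * n := by ring
        linarith
      obtain ⟨y₁, hy₁⟩ := hexists
      have hFTC : (∫ t in y₁..y, F' t) = B (x, y) ^ 2 - B (x, y₁) ^ 2 :=
        intervalIntegral.integral_eq_sub_of_hasDerivAt (fun t _ => hderiv t)
          hF'int.intervalIntegrable
      have := hII y₁ y
      rw [hFTC] at this
      have := abs_le.mp this
      linarith [this.2, hy₁.le]
    -- pass to the supremum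
    have hbdd : BddAbove (Set.range fun y => |B (x, y)|) := by
      refine ⟨Real.sqrt g, ?_⟩
      rintro _ ⟨y, rfl⟩
      show |B (x, y)| ≤ Real.sqrt g
      rw [← Real.sqrt_sq_eq_abs]
      exact Real.sqrt_le_sqrt (hpt y)
    have hsup_le : (⨆ y : ℝ, |B (x, y)|) ≤ Real.sqrt g := by
      refine ciSup_le fun y => ?_
      rw [← Real.sqrt_sq_eq_abs]
      exact Real.sqrt_le_sqrt (hpt y)
    have hsup_nn : 0 ≤ ⨆ y : ℝ, |B (x, y)| :=
      le_trans (abs_nonneg _) (le_ciSup hbdd 0)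
    calc (⨆ y : ℝ, |B (x, y)|) ^ 2 ≤ Real.sqrt g ^ 2 :=
          pow_le_pow_left₀ hsup_nn hsup_le 2
      _ = g := Real.sq_sqrt hgnn
  -- integrate in x
  have hgint : Integrable (fun x : ℝ => ∫ y : ℝ, G (x, y)) := hGint.integral_prod_left
  have hstep1 : (∫ x : ℝ, (⨆ y : ℝ, |B (x, y)|) ^ 2) ≤ ∫ x : ℝ, ∫ y : ℝ, G (x, y) := by
    by_cases hi : Integrable (fun x : ℝ => (⨆ y : ℝ, |B (x, y)|) ^ 2)
    · exact integral_mono_ae hi hgint hglb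
    · rw [integral_undef hi]
      exact integral_nonneg fun x => integral_nonneg fun y => hGnonneg _
  have hstep2 : (∫ x : ℝ, ∫ y : ℝ, G (x, y)) = ∫ p : ℝ × ℝ, G p := by
    rw [hvol]
    exact (integral_prod G hGint).symm
  -- Cauchy-Schwarz
  rw [← hvol] at hBint
  have hCS : (∫ p : ℝ × ℝ, G p)
      ≤ 2 * ((∫ p : ℝ × ℝ, B p ^ 2) ^ ((1:ℝ)/2) * (∫ p : ℝ × ℝ, dy B p ^ 2) ^ ((1:ℝ)/2)) := by
    have h1 : (∫ p : ℝ × ℝ, G p) = 2 * ∫ p : ℝ × ℝ, |B p| * |dy B p| := by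
      rw [← integral_const_mul]
      exact integral_congr_ae (Filter.Eventually.of_forall fun p => by simp [G, abs_mul])
    rw [h1]
    have hpq : Real.HolderConjugate 2 2 := Real.HolderConjugate.two_two
    have hmB2 : MemLp (fun p : ℝ × ℝ => |B p|) (ENNReal.ofReal 2) volume := by
      rw [show ENNReal.ofReal 2 = 2 by norm_num]
      refine (memLp_two_iff_integrable_sq hmB.abs.aestronglyMeasurable).mpr ?_
      simpa [sq_abs] using hBint
    have hmd2 : MemLp (fun p : ℝ × ℝ => |dy B p|) (ENNReal.ofReal 2) volume := by
      rw [show ENNReal.ofReal 2 = 2 by norm_num]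
      refine (memLp_two_iff_integrable_sq hmd.abs.aestronglyMeasurable).mpr ?_
      simpa [sq_abs] using hdyint'
    have := integral_mul_le_Lp_mul_Lq_of_nonneg hpq
      (Filter.Eventually.of_forall fun p => abs_nonneg (B p))
      (Filter.Eventually.of_forall fun p => abs_nonneg (dy B p)) hmB2 hmd2
    have heq1 : (∫ p : ℝ × ℝ, |B p| ^ (2:ℝ)) = ∫ p : ℝ × ℝ, B p ^ 2 := by
      refine integral_congr_ae (Filter.Eventually.of_forall fun p => ?_)
      show _ ^ (2:ℝ) = _
      rw [show ((2:ℝ)) = ((2:ℕ):ℝ) by norm_num, Real.rpow_natCast, sq_abs]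
    have heq2 : (∫ p : ℝ × ℝ, |dy B p| ^ (2:ℝ)) = ∫ p : ℝ × ℝ, dy B p ^ 2 := by
      refine integral_congr_ae (Filter.Eventually.of_forall fun p => ?_)
      show _ ^ (2:ℝ) = _
      rw [show ((2:ℝ)) = ((2:ℕ):ℝ) by norm_num, Real.rpow_natCast, sq_abs]
    rw [heq1, heq2] at this
    linarith
  -- put things together
  set t1 : ℝ := ∫ p : ℝ × ℝ, B p ^ 2 with ht1
  set t2 : ℝ := ∫ p : ℝ × ℝ, dx b p ^ 2 with ht2
  have ht1nn : 0 ≤ t1 := integral_nonneg fun p => sq_nonneg _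
  have ht2nn : 0 ≤ t2 := integral_nonneg fun p => sq_nonneg _
  have ht12 : (∫ p : ℝ × ℝ, dy B p ^ 2) = t2 := by
    rw [ht2]; exact integral_congr_ae (Filter.Eventually.of_forall fun p => (hsq p).symm)
  have hfinal : (∫ x : ℝ, (⨆ y : ℝ, |B (x, y)|) ^ 2)
      ≤ 2 * (t1 ^ ((1:ℝ)/2) * t2 ^ ((1:ℝ)/2)) := by
    rw [← ht12]
    calc (∫ x : ℝ, (⨆ y : ℝ, |B (x, y)|) ^ 2)
        ≤ ∫ x : ℝ, ∫ y : ℝ, G (x, y) := hstep1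
      _ = ∫ p : ℝ × ℝ, G p := hstep2
      _ ≤ _ := by rw [ht12] at hCS ⊢; exact hCS
  calc Real.sqrt (∫ x : ℝ, (⨆ y : ℝ, |B (x, y)|) ^ 2)
      ≤ Real.sqrt (2 * (t1 ^ ((1:ℝ)/2) * t2 ^ ((1:ℝ)/2))) := Real.sqrt_le_sqrt hfinal
    _ = Real.sqrt 2 * (Real.sqrt (t1 ^ ((1:ℝ)/2)) * Real.sqrt (t2 ^ ((1:ℝ)/2))) := by
        rw [Real.sqrt_mul (by norm_num), Real.sqrt_mul (Real.rpow_nonneg ht1nn _)]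
    _ = Real.sqrt 2 * Real.sqrt t1 ^ ((1:ℝ)/2) * Real.sqrt t2 ^ ((1:ℝ)/2) := by
        rw [Real.sqrt_eq_rpow (t1 ^ _), Real.sqrt_eq_rpow (t2 ^ _),
          Real.sqrt_eq_rpow t1, Real.sqrt_eq_rpow t2]
        ring
    _ = _ := rfl
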